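/- arXiv:2508.17251 — 2 statements merged into one kernel-verified Lean document; each statement's English description precedes it below -/
import Mathlib

section
/- Suppose λ(Ã) ∩ λ(S) = ∅ and S ∈ ℝ^(ν×ν) is invertible. Let Π̃ ∈ ℝ^(2n×ν) be the unique solution of ÃΠ̃ − Π̃S = −B̃L for the structured realisation (Ã, B̃, C̃) of formula (58)-type (second block a chain fed by input, with C̃ equal to the n-th row structure). Then for every j = 1,…,n, the j-th row Π̃_j of Π̃ satisfies C̃Π̃ = Π̃_j S^(n−j+1). In particular, C̃Π̃ = Π̃_n S. -/
/-- The set of complex eigenvalues of a real square matrix. -/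
noncomputable def cSpectrum {m : Type*} [Fintype m] [DecidableEq m]
    (A : Matrix m m ℝ) : Set ℂ :=
  spectrum ℂ (A.map Complex.ofReal)

/-- State matrix of the non-minimal left-difference-operator realisation:
top-left block has ones on the superdiagonal and last row `-a`; top-right
block has last row `b` and zeros elsewhere; bottom-right block is the upper
shift. -/
def Atilde (n : ℕ) (a b : Fin n → ℝ) :
    Matrix (Fin n ⊕ Fin n) (Fin n ⊕ Fin n) ℝ :=
  Matrix.fromBlocks
    (Matrix.of fun i j =>
      if (i : ℕ) = n - 1 then -a j
      else if (i : ℕ) + 1 = (j : ℕ) then 1 else 0)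
    (Matrix.of fun i j => if (i : ℕ) = n - 1 then b j else 0)
    0
    (Matrix.of fun i j => if (i : ℕ) + 1 = (j : ℕ) then 1 else 0)

/-- Input matrix `e_{2n}` of the realisation. -/
def Btilde (n : ℕ) : Matrix (Fin n ⊕ Fin n) (Fin 1) ℝ :=
  Matrix.of fun i _ =>
    match i with
    | Sum.inl _ => 0
    | Sum.inr j => if (j : ℕ) = n - 1 then 1 else 0

/-- Output matrix `(-a₁,…,-a_n, b₁,…,b_n)` of the realisation. -/
def Ctilde (n : ℕ) (a b : Fin n → ℝ) : Matrix (Fin 1) (Fin n ⊕ Fin n) ℝ :=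
  Matrix.of fun _ j =>
    match j with
    | Sum.inl j => -a j
    | Sum.inr j => b j

section aux
variable {n ν : ℕ} (a b : Fin n → ℝ)
  (S : Matrix (Fin ν) (Fin ν) ℝ) (L : Matrix (Fin 1) (Fin ν) ℝ)
  (Pt : Matrix (Fin n ⊕ Fin n) (Fin ν) ℝ)

/-- row `inl i` of the Sylvester equation, entrywise -/
lemma sylv_row (hPt : Atilde n a b * Pt - Pt * S = -(Btilde n * L))
    (i : Fin n) (k : Fin ν) :
    (∑ x, Atilde n a b (Sum.inl i) x * Pt x k) = ∑ m, Pt (Sum.inl i) m * S m k := by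
  have h := congrArg (fun M => M (Sum.inl i) k) hPt
  simp only [Matrix.sub_apply, Matrix.neg_apply, Matrix.mul_apply, Btilde,
    Matrix.of_apply, zero_mul, Finset.sum_const_zero, neg_zero, sub_eq_zero] at h
  exact h

lemma step (hPt : Atilde n a b * Pt - Pt * S = -(Btilde n * L))
    (i : Fin n) (h : (i : ℕ) + 1 < n) (k : Fin ν) :
    Pt (Sum.inl ⟨(i : ℕ) + 1, h⟩) k = ∑ m, Pt (Sum.inl i) m * S m k := by
  have hne : (i : ℕ) ≠ n - 1 := by omega
  have hrow := sylv_row a b S L Pt hPt i k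
  rw [Fintype.sum_sum_type] at hrow
  simp only [Atilde, Matrix.fromBlocks_apply₁₁, Matrix.fromBlocks_apply₁₂,
    Matrix.of_apply, hne, if_false, ite_mul, one_mul, zero_mul,
    Finset.sum_const_zero, add_zero] at hrow
  rw [← hrow]
  symm
  rw [Finset.sum_eq_single (⟨(i : ℕ) + 1, h⟩ : Fin n)]
  · simp
  · intro x _ hx
    rw [if_neg]
    intro hc
    exact hx (Fin.ext hc.symm)
  · intro hx
    exact absurd (Finset.mem_univ _) hx

lemma last_row (hn : 0 < n) (hPt : Atilde n a b * Pt - Pt * S = -(Btilde n * L))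
    (k : Fin ν) :
    (Ctilde n a b * Pt) 0 k = ∑ m, Pt (Sum.inl ⟨n - 1, by omega⟩) m * S m k := by
  have hrow := sylv_row a b S L Pt hPt ⟨n - 1, by omega⟩ k
  rw [Fintype.sum_sum_type] at hrow
  simp only [Atilde, Matrix.fromBlocks_apply₁₁, Matrix.fromBlocks_apply₁₂,
    Matrix.of_apply, if_pos rfl] at hrow
  rw [← hrow, Matrix.mul_apply, Fintype.sum_sum_type]
  simp [Ctilde]

end aux

theorem pitilde_row_structure
    (n ν : ℕ) (hn : 0 < n) (a b : Fin n → ℝ)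
    (S : Matrix (Fin ν) (Fin ν) ℝ) (L : Matrix (Fin 1) (Fin ν) ℝ)
    (hS : IsUnit S)
    (hspec : cSpectrum (Atilde n a b) ∩ cSpectrum S = ∅)
    (Pt : Matrix (Fin n ⊕ Fin n) (Fin ν) ℝ)
    (hPt : Atilde n a b * Pt - Pt * S = -(Btilde n * L)) :
    ∀ j : Fin n,
      Ctilde n a b * Pt =
        (Matrix.of fun (_ : Fin 1) k => Pt (Sum.inl j) k) * S ^ (n - (j : ℕ)) := by
  set R : Fin n → Matrix (Fin 1) (Fin ν) ℝ :=
    fun i => Matrix.of fun _ k => Pt (Sum.inl i) k with hR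
  have hstep : ∀ (i : Fin n) (h : (i : ℕ) + 1 < n), R ⟨(i : ℕ) + 1, h⟩ = R i * S := by
    intro i h
    ext x k
    have := step a b S L Pt hPt i h k
    simpa [hR, Matrix.mul_apply] using this
  have hlast : Ctilde n a b * Pt = R ⟨n - 1, by omega⟩ * S := by
    ext x k
    have hx : x = 0 := Subsingleton.elim _ _
    subst hx
    simpa [hR, Matrix.mul_apply] using last_row a b S L Pt hn hPt k
  have key : ∀ m (j : Fin n), (j : ℕ) + m = n - 1 →
      R ⟨n - 1, by omega⟩ = R j * S ^ m := by
    intro m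
    induction m with
    | zero =>
      intro j hj
      have : j = ⟨n - 1, by omega⟩ := by
        apply Fin.ext
        simp
        omega
      rw [this]
      simp
    | succ m ih =>
      intro j hj
      have h1 : (j : ℕ) + 1 < n := by omega
      have h2 := ih ⟨(j : ℕ) + 1, h1⟩ (by simp; omega)
      rw [h2, hstep j h1, Matrix.mul_assoc, ← pow_succ']
  intro j
  have hm : (j : ℕ) + (n - 1 - (j : ℕ)) = n - 1 := by omega
  have hnj : n - 1 - (j : ℕ) + 1 = n - (j : ℕ) := by omega
  rw [hlast, key (n - 1 - (j : ℕ)) j hm, Matrix.mul_assoc, ← pow_succ, hnj]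
end

section
/- Two state-space realisations with the same transfer function have the same moments: if C(z_iI−A)⁻¹B = C̃(z_iI−Ã)⁻¹B̃ for all z_i ∉ λ(A) ∪ λ(Ã), and Π, Π̃ solve AΠ − ΠS = −BL and ÃΠ̃ − Π̃S = −B̃L respectively with λ(S) disjoint from λ(A) ∪ λ(Ã), then CΠ = C̃Π̃. -/
open Polynomial Matrix

lemma charmatrix_map_eval {k : ℕ} (M : Matrix (Fin k) (Fin k) ℂ) (z : ℂ) :
    (charmatrix M).map (Polynomial.eval z) = z • (1 : Matrix (Fin k) (Fin k) ℂ) - M := by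
  ext i j
  by_cases h : i = j <;>
    simp [h, charmatrix_apply, Matrix.map_apply, Matrix.sub_apply, Matrix.smul_apply,
      Matrix.one_apply, Matrix.diagonal]

lemma eval_charpoly' {k : ℕ} (M : Matrix (Fin k) (Fin k) ℂ) (z : ℂ) :
    M.charpoly.eval z = (z • (1 : Matrix (Fin k) (Fin k) ℂ) - M).det := by
  have h := RingHom.map_det (Polynomial.evalRingHom z) (charmatrix M)
  rw [Matrix.charpoly]
  simpa [RingHom.mapMatrix_apply, Polynomial.coe_evalRingHom, charmatrix_map_eval] using h

lemma adjugate_charmatrix_map_eval {k : ℕ} (M : Matrix (Fin k) (Fin k) ℂ) (z : ℂ) :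
    ((charmatrix M).adjugate).map (Polynomial.eval z) =
      (z • (1 : Matrix (Fin k) (Fin k) ℂ) - M).adjugate := by
  have h := RingHom.map_adjugate (Polynomial.evalRingHom z) (charmatrix M)
  simpa [RingHom.mapMatrix_apply, Polynomial.coe_evalRingHom, charmatrix_map_eval] using h

lemma notMem_spectrum_iff' {k : ℕ} (M : Matrix (Fin k) (Fin k) ℂ) (z : ℂ) :
    z ∉ spectrum ℂ M ↔ M.charpoly.eval z ≠ 0 := by
  rw [spectrum.notMem_iff, Matrix.isUnit_iff_isUnit_det, isUnit_iff_ne_zero,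
    Algebra.algebraMap_eq_smul_one, eval_charpoly']

lemma spectrum_finite' {k : ℕ} (M : Matrix (Fin k) (Fin k) ℂ) :
    (spectrum ℂ M).Finite := by
  refine Set.Finite.subset (Polynomial.finite_setOf_isRoot
    (p := M.charpoly) (M.charpoly_monic.ne_zero)) ?_
  intro z hz
  simp only [Set.mem_setOf_eq, Polynomial.IsRoot]
  by_contra h
  exact (notMem_spectrum_iff' M z).mpr h hz

lemma degree_adjugate_charmatrix_le {k : ℕ} (M : Matrix (Fin k) (Fin k) ℂ) (i j : Fin k) :
    ((charmatrix M).adjugate i j).degree ≤ ((k - 1 : ℕ) : WithBot ℕ) := by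
  rw [Matrix.adjugate_apply, Matrix.det_apply]
  refine (Polynomial.degree_sum_le _ _).trans ?_
  refine Finset.sup_le fun σ _ => ?_
  set N := ((charmatrix M).updateRow j (Pi.single i 1)) with hN
  have hterm : (Equiv.Perm.sign σ • ∏ x, N (σ x) x).degree ≤ (∏ x, N (σ x) x).degree := by
    rcases Int.units_eq_one_or (Equiv.Perm.sign σ) with h | h <;> simp [h]
  refine hterm.trans ?_
  refine (Polynomial.degree_le_natDegree).trans ?_
  have hb : (∏ x, N (σ x) x).natDegree ≤ k - 1 := by
    refine (Polynomial.natDegree_prod_le _ _).trans ?_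
    have hx : ∀ x : Fin k, (N (σ x) x).natDegree ≤ if x = σ⁻¹ j then 0 else 1 := by
      intro x
      by_cases hxx : x = σ⁻¹ j
      · subst hxx
        have h1 : σ (σ⁻¹ j) = j := Equiv.apply_symm_apply σ j
        rw [hN, h1, Matrix.updateRow_self, if_pos rfl]
        by_cases hxi : σ⁻¹ j = i
        · subst hxi; simp
        · simp [Pi.single_apply, show (Equiv.symm σ) j ≠ i from hxi]
      · have hσ : σ x ≠ j := by
          intro hc; exact hxx (by rw [← hc]; exact (Equiv.symm_apply_apply σ x).symm)
        rw [hN, Matrix.updateRow_ne hσ, if_neg hxx]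
        by_cases hd : σ x = x
        · rw [hd, Matrix.charmatrix_apply_eq]
          refine (Polynomial.natDegree_sub_le _ _).trans ?_
          simp
        · rw [Matrix.charmatrix_apply_ne _ _ _ hd]
          simp
    refine (Finset.sum_le_sum fun x _ => hx x).trans ?_
    rw [← Finset.add_sum_erase _ _ (Finset.mem_univ (σ⁻¹ j)), if_pos rfl]
    have : ∀ x ∈ Finset.univ.erase (σ⁻¹ j), (if x = σ⁻¹ j then 0 else 1) = 1 := by
      intro x hx'
      rw [if_neg (Finset.ne_of_mem_erase hx')]
    rw [Finset.sum_congr rfl this]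
    simp [Finset.card_erase_of_mem]
  exact_mod_cast Nat.cast_le.mpr hb

lemma coprime_of_no_common_root {p q : ℂ[X]} (hp : p ≠ 0)
    (h : ∀ z : ℂ, p.IsRoot z → ¬ q.IsRoot z) : IsCoprime p q := by
  classical
  rw [← EuclideanDomain.gcd_isUnit_iff]
  by_contra hu
  have hg0 : EuclideanDomain.gcd p q ≠ 0 := by
    intro h0
    exact hp (EuclideanDomain.gcd_eq_zero_iff.mp h0).1
  have hdeg : 0 < (EuclideanDomain.gcd p q).degree := by
    rcases lt_or_eq_of_le (Polynomial.zero_le_degree_iff.mpr hg0) with h1 | h1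
    · exact h1
    · exact absurd (Polynomial.isUnit_iff_degree_eq_zero.mpr h1.symm) hu
  obtain ⟨z, hz⟩ := Complex.exists_root hdeg
  exact h z (hz.dvd (EuclideanDomain.gcd_dvd_left p q))
    (hz.dvd (EuclideanDomain.gcd_dvd_right p q))

lemma map_ofReal_mul {p q r : ℕ} (M : Matrix (Fin p) (Fin q) ℝ) (N : Matrix (Fin q) (Fin r) ℝ) :
    (M * N).map Complex.ofReal = M.map Complex.ofReal * N.map Complex.ofReal := by
  ext i j
  simp [Matrix.map_apply, Matrix.mul_apply]

lemma map_eval_mul {p q r : ℕ} (z : ℂ) (M : Matrix (Fin p) (Fin q) ℂ[X])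
    (N : Matrix (Fin q) (Fin r) ℂ[X]) :
    (M * N).map (Polynomial.eval z) = M.map (Polynomial.eval z) * N.map (Polynomial.eval z) := by
  ext i j
  simp [Matrix.map_apply, Matrix.mul_apply, Polynomial.eval_finset_sum]

lemma map_eval_smul {p q : ℕ} (z : ℂ) (c : ℂ[X]) (M : Matrix (Fin p) (Fin q) ℂ[X]) :
    (c • M).map (Polynomial.eval z) = c.eval z • M.map (Polynomial.eval z) := by
  ext i j
  simp [Matrix.map_apply, Matrix.smul_apply, smul_eq_mul]

lemma map_eval_sub {p q : ℕ} (z : ℂ) (M N : Matrix (Fin p) (Fin q) ℂ[X]) :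
    (M - N).map (Polynomial.eval z) = M.map (Polynomial.eval z) - N.map (Polynomial.eval z) := by
  ext i j
  simp [Matrix.map_apply, Matrix.sub_apply]

lemma map_C_map_eval {p q : ℕ} (z : ℂ) (M : Matrix (Fin p) (Fin q) ℂ) :
    (M.map Polynomial.C).map (Polynomial.eval z) = M := by
  ext i j
  simp [Matrix.map_apply]

/-- resolvent identity for one realisation -/
lemma resolvent_identity {p q : ℕ} (Ac : Matrix (Fin p) (Fin p) ℂ) (Bc : Matrix (Fin p) (Fin 1) ℂ)
    (Cc : Matrix (Fin 1) (Fin p) ℂ) (Sc : Matrix (Fin q) (Fin q) ℂ)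
    (Lc : Matrix (Fin 1) (Fin q) ℂ) (Pc : Matrix (Fin p) (Fin q) ℂ)
    (hsyl : Ac * Pc - Pc * Sc = -(Bc * Lc)) (z : ℂ)
    (hA : IsUnit (z • (1 : Matrix (Fin p) (Fin p) ℂ) - Ac).det)
    (hS : IsUnit (z • (1 : Matrix (Fin q) (Fin q) ℂ) - Sc).det) :
    Cc * Pc * (z • (1 : Matrix (Fin q) (Fin q) ℂ) - Sc)⁻¹ -
      Cc * (z • (1 : Matrix (Fin p) (Fin p) ℂ) - Ac)⁻¹ * Pc =
    Cc * (z • (1 : Matrix (Fin p) (Fin p) ℂ) - Ac)⁻¹ * Bc *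
      (Lc * (z • (1 : Matrix (Fin q) (Fin q) ℂ) - Sc)⁻¹) := by
  set RA := z • (1 : Matrix (Fin p) (Fin p) ℂ) - Ac with hRA
  set RS := z • (1 : Matrix (Fin q) (Fin q) ℂ) - Sc with hRS
  have h1 : RA * Pc - Pc * RS = Bc * Lc := by
    have e1 : RA * Pc = z • Pc - Ac * Pc := by
      rw [hRA, Matrix.sub_mul, Matrix.smul_mul, Matrix.one_mul]
    have e2 : Pc * RS = z • Pc - Pc * Sc := by
      rw [hRS, Matrix.mul_sub, Matrix.mul_smul, Matrix.mul_one]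
    rw [e1, e2]
    have := hsyl
    have h2 : Pc * Sc - Ac * Pc = Bc * Lc := by
      have := congrArg Neg.neg hsyl
      rw [neg_neg, neg_sub] at this
      exact this
    calc z • Pc - Ac * Pc - (z • Pc - Pc * Sc) = Pc * Sc - Ac * Pc := by abel
      _ = Bc * Lc := h2
  have h2 : Pc * RS⁻¹ - RA⁻¹ * Pc = RA⁻¹ * (Bc * Lc) * RS⁻¹ := by
    have e3 : RA⁻¹ * (RA * Pc) * RS⁻¹ = Pc * RS⁻¹ := by
      rw [← Matrix.mul_assoc, Matrix.nonsing_inv_mul _ hA, Matrix.one_mul]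
    have e4 : RA⁻¹ * (Pc * RS) * RS⁻¹ = RA⁻¹ * Pc := by
      rw [Matrix.mul_assoc RA⁻¹ (Pc * RS) RS⁻¹, Matrix.mul_assoc Pc RS RS⁻¹,
        Matrix.mul_nonsing_inv _ hS, Matrix.mul_one]
    have h3 : RA⁻¹ * (RA * Pc - Pc * RS) * RS⁻¹ = RA⁻¹ * (Bc * Lc) * RS⁻¹ := by rw [h1]
    rw [Matrix.mul_sub, Matrix.sub_mul, e3, e4] at h3
    exact h3
  have h4 : Cc * (Pc * RS⁻¹ - RA⁻¹ * Pc) = Cc * (RA⁻¹ * (Bc * Lc) * RS⁻¹) := by rw [h2]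
  rw [Matrix.mul_sub] at h4
  calc Cc * Pc * RS⁻¹ - Cc * RA⁻¹ * Pc
      = Cc * (Pc * RS⁻¹) - Cc * (RA⁻¹ * Pc) := by rw [Matrix.mul_assoc, Matrix.mul_assoc]
    _ = Cc * (RA⁻¹ * (Bc * Lc) * RS⁻¹) := h4
    _ = Cc * RA⁻¹ * Bc * (Lc * RS⁻¹) := by
        simp only [Matrix.mul_assoc]

theorem moments_invariant_under_realisation
    (n nt ν : ℕ)
    (A : Matrix (Fin n) (Fin n) ℝ) (B : Matrix (Fin n) (Fin 1) ℝ)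
    (C : Matrix (Fin 1) (Fin n) ℝ)
    (At : Matrix (Fin nt) (Fin nt) ℝ) (Bt : Matrix (Fin nt) (Fin 1) ℝ)
    (Ct : Matrix (Fin 1) (Fin nt) ℝ)
    (S : Matrix (Fin ν) (Fin ν) ℝ) (L : Matrix (Fin 1) (Fin ν) ℝ)
    (Pim : Matrix (Fin n) (Fin ν) ℝ) (Pimt : Matrix (Fin nt) (Fin ν) ℝ)
    (htf : ∀ z : ℂ, z ∉ cSpectrum A ∪ cSpectrum At →
      C.map Complex.ofReal * (z • (1 : Matrix (Fin n) (Fin n) ℂ) -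
          A.map Complex.ofReal)⁻¹ * B.map Complex.ofReal =
      Ct.map Complex.ofReal * (z • (1 : Matrix (Fin nt) (Fin nt) ℂ) -
          At.map Complex.ofReal)⁻¹ * Bt.map Complex.ofReal)
    (hdisj : cSpectrum S ∩ (cSpectrum A ∪ cSpectrum At) = ∅)
    (hPi : A * Pim - Pim * S = -(B * L))
    (hPit : At * Pimt - Pimt * S = -(Bt * L)) :
    C * Pim = Ct * Pimt := by
  classical
  rcases Nat.eq_zero_or_pos ν with hν0 | hν
  · subst hν0; ext i j; exact j.elim0
  simp only [cSpectrum] at htf hdisj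
  set Ac := A.map Complex.ofReal with hAcdef
  set Atc := At.map Complex.ofReal with hAtcdef
  set Sc := S.map Complex.ofReal with hScdef
  set Bc := B.map Complex.ofReal with hBcdef
  set Btc := Bt.map Complex.ofReal with hBtcdef
  set Cc := C.map Complex.ofReal with hCcdef
  set Ctc := Ct.map Complex.ofReal with hCtcdef
  set Lc := L.map Complex.ofReal with hLcdef
  set Pc := Pim.map Complex.ofReal with hPcdef
  set Ptc := Pimt.map Complex.ofReal with hPtcdef
  have hsylC : Ac * Pc - Pc * Sc = -(Bc * Lc) := by
    rw [hAcdef, hPcdef, hScdef, hBcdef, hLcdef, ← map_ofReal_mul, ← map_ofReal_mul,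
      ← map_ofReal_mul]
    ext i j
    have h := congrFun (congrFun hPi i) j
    simp only [Matrix.sub_apply, Matrix.neg_apply, Matrix.map_apply] at h ⊢
    exact_mod_cast h
  have hsylCt : Atc * Ptc - Ptc * Sc = -(Btc * Lc) := by
    rw [hAtcdef, hPtcdef, hScdef, hBtcdef, hLcdef, ← map_ofReal_mul, ← map_ofReal_mul,
      ← map_ofReal_mul]
    ext i j
    have h := congrFun (congrFun hPit i) j
    simp only [Matrix.sub_apply, Matrix.neg_apply, Matrix.map_apply] at h ⊢
    exact_mod_cast h
  set pA := Ac.charpoly with hpA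
  set pAt := Atc.charpoly with hpAt
  set pS := Sc.charpoly with hpS
  set MS := charmatrix Sc with hMSdef
  set E : Matrix (Fin 1) (Fin ν) ℂ[X] := (Cc * Pc - Ctc * Ptc).map Polynomial.C with hEdef
  set R : Matrix (Fin 1) (Fin ν) ℂ[X] :=
    pAt • (Cc.map Polynomial.C * (charmatrix Ac).adjugate * Pc.map Polynomial.C) -
    pA • (Ctc.map Polynomial.C * (charmatrix Atc).adjugate * Ptc.map Polynomial.C) with hRdef
  have hfin : (spectrum ℂ Ac ∪ spectrum ℂ Atc ∪ spectrum ℂ Sc).Finite :=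
    ((spectrum_finite' Ac).union (spectrum_finite' Atc)).union (spectrum_finite' Sc)
  -- the key polynomial identity, proved by evaluating at infinitely many points
  have hmat : ∀ z : ℂ, z ∉ spectrum ℂ Ac ∪ spectrum ℂ Atc ∪ spectrum ℂ Sc →
      (((pA * pAt) • E).map (Polynomial.eval z)) = ((R * MS).map (Polynomial.eval z)) := by
    intro z hz
    simp only [Set.mem_union, not_or] at hz
    obtain ⟨⟨hzA, hzAt⟩, hzS⟩ := hz
    have hdA : pA.eval z ≠ 0 := (notMem_spectrum_iff' Ac z).mp hzA
    have hdAt : pAt.eval z ≠ 0 := (notMem_spectrum_iff' Atc z).mp hzAt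
    have hdS : pS.eval z ≠ 0 := (notMem_spectrum_iff' Sc z).mp hzS
    have hdetA : (z • (1 : Matrix (Fin n) (Fin n) ℂ) - Ac).det = pA.eval z :=
      (eval_charpoly' Ac z).symm
    have hdetAt : (z • (1 : Matrix (Fin nt) (Fin nt) ℂ) - Atc).det = pAt.eval z :=
      (eval_charpoly' Atc z).symm
    have hdetS : (z • (1 : Matrix (Fin ν) (Fin ν) ℂ) - Sc).det = pS.eval z :=
      (eval_charpoly' Sc z).symm
    have huA : IsUnit (z • (1 : Matrix (Fin n) (Fin n) ℂ) - Ac).det := by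
      rw [hdetA]; exact isUnit_iff_ne_zero.mpr hdA
    have huAt : IsUnit (z • (1 : Matrix (Fin nt) (Fin nt) ℂ) - Atc).det := by
      rw [hdetAt]; exact isUnit_iff_ne_zero.mpr hdAt
    have huS : IsUnit (z • (1 : Matrix (Fin ν) (Fin ν) ℂ) - Sc).det := by
      rw [hdetS]; exact isUnit_iff_ne_zero.mpr hdS
    have r1 := resolvent_identity Ac Bc Cc Sc Lc Pc hsylC z huA huS
    have r2 := resolvent_identity Atc Btc Ctc Sc Lc Ptc hsylCt z huAt huS
    have htfz := htf z (by
      intro hm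
      rcases hm with hm | hm
      · exact hzA hm
      · exact hzAt hm)
    rw [htfz] at r1
    have h6 : Cc * Pc * (z • (1 : Matrix (Fin ν) (Fin ν) ℂ) - Sc)⁻¹ -
        Cc * (z • (1 : Matrix (Fin n) (Fin n) ℂ) - Ac)⁻¹ * Pc =
        Ctc * Ptc * (z • (1 : Matrix (Fin ν) (Fin ν) ℂ) - Sc)⁻¹ -
        Ctc * (z • (1 : Matrix (Fin nt) (Fin nt) ℂ) - Atc)⁻¹ * Ptc := r1.trans r2.symm
    have comb := sub_eq_sub_iff_sub_eq_sub.mp h6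
    -- multiply by (zI - S) on the right
    have h7 : Cc * Pc - Ctc * Ptc =
        (Cc * (z • (1 : Matrix (Fin n) (Fin n) ℂ) - Ac)⁻¹ * Pc -
          Ctc * (z • (1 : Matrix (Fin nt) (Fin nt) ℂ) - Atc)⁻¹ * Ptc) *
          (z • (1 : Matrix (Fin ν) (Fin ν) ℂ) - Sc) := by
      have eL : ∀ (XX : Matrix (Fin 1) (Fin ν) ℂ),
          XX * (z • (1 : Matrix (Fin ν) (Fin ν) ℂ) - Sc)⁻¹ *
            (z • (1 : Matrix (Fin ν) (Fin ν) ℂ) - Sc) = XX := fun XX => by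
        rw [Matrix.mul_assoc, Matrix.nonsing_inv_mul _ huS, Matrix.mul_one]
      have h8 := congrArg (fun M => M * (z • (1 : Matrix (Fin ν) (Fin ν) ℂ) - Sc)) comb
      simp only [Matrix.sub_mul] at h8
      rw [eL, eL, ← Matrix.sub_mul] at h8
      exact h8
    -- adjugates as scalars times inverses
    have hadjA : (z • (1 : Matrix (Fin n) (Fin n) ℂ) - Ac).adjugate =
        pA.eval z • (z • (1 : Matrix (Fin n) (Fin n) ℂ) - Ac)⁻¹ := by
      rw [Matrix.inv_def, smul_smul, hdetA, Ring.inverse_eq_inv', mul_inv_cancel₀ hdA, one_smul]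
    have hadjAt : (z • (1 : Matrix (Fin nt) (Fin nt) ℂ) - Atc).adjugate =
        pAt.eval z • (z • (1 : Matrix (Fin nt) (Fin nt) ℂ) - Atc)⁻¹ := by
      rw [Matrix.inv_def, smul_smul, hdetAt, Ring.inverse_eq_inv', mul_inv_cancel₀ hdAt, one_smul]
    -- now compute both sides of the evaluated identity
    rw [map_eval_smul, map_eval_mul, hEdef, map_C_map_eval, hRdef, map_eval_sub,
      map_eval_smul, map_eval_smul, map_eval_mul, map_eval_mul, map_eval_mul, map_eval_mul,
      map_C_map_eval, map_C_map_eval, map_C_map_eval, map_C_map_eval,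
      adjugate_charmatrix_map_eval, adjugate_charmatrix_map_eval, hMSdef, charmatrix_map_eval]
    rw [h7, hadjA, hadjAt, Polynomial.eval_mul]
    simp only [Matrix.mul_smul, Matrix.smul_mul, smul_smul,
      mul_comm (Polynomial.eval z pAt) (Polynomial.eval z pA)]
    rw [← smul_sub, Matrix.smul_mul]
  have key : (pA * pAt) • E = R * MS := by
    refine Matrix.ext fun i j => ?_
    refine Polynomial.eq_of_infinite_eval_eq _ _ ?_
    refine (hfin.infinite_compl).mono fun z hz => ?_
    simp only [Set.mem_setOf_eq]
    exact congrFun (congrFun (hmat z hz) i) j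
  -- coprimality of charpolys
  have hroot_spec : ∀ {k : ℕ} (M : Matrix (Fin k) (Fin k) ℂ) (z : ℂ),
      M.charpoly.IsRoot z → z ∈ spectrum ℂ M := by
    intro k M z hr
    by_contra hc
    exact (notMem_spectrum_iff' M z).mp hc hr
  have hdisj' := Set.eq_empty_iff_forall_notMem.mp hdisj
  have hcopA : IsCoprime pS pA := by
    refine coprime_of_no_common_root (Sc.charpoly_monic.ne_zero) fun z h1 h2 => ?_
    exact hdisj' z ⟨hroot_spec Sc z h1, Or.inl (hroot_spec Ac z h2)⟩
  have hcopAt : IsCoprime pS pAt := by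
    refine coprime_of_no_common_root (Sc.charpoly_monic.ne_zero) fun z h1 h2 => ?_
    exact hdisj' z ⟨hroot_spec Sc z h1, Or.inr (hroot_spec Atc z h2)⟩
  have hcop : IsCoprime pS (pA * pAt) := hcopA.mul_right hcopAt
  have hdetMS : MS.det = pS := by rw [hMSdef, hpS, Matrix.charpoly]
  have key2 : (pA * pAt) • (E * MS.adjugate) = pS • R := by
    calc (pA * pAt) • (E * MS.adjugate) = ((pA * pAt) • E) * MS.adjugate := by
          rw [Matrix.smul_mul]
      _ = R * MS * MS.adjugate := by rw [key]
      _ = R * (MS * MS.adjugate) := by rw [Matrix.mul_assoc]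
      _ = R * (MS.det • (1 : Matrix (Fin ν) (Fin ν) ℂ[X])) := by rw [Matrix.mul_adjugate]
      _ = MS.det • (R * (1 : Matrix (Fin ν) (Fin ν) ℂ[X])) := by rw [Matrix.mul_smul]
      _ = pS • R := by rw [Matrix.mul_one, hdetMS]
  have hdegS : pS.degree = (ν : ℕ) := by
    rw [hpS, Polynomial.degree_eq_natDegree (Sc.charpoly_monic.ne_zero),
      Matrix.charpoly_natDegree_eq_dim, Fintype.card_fin]
  have hQ : E * MS.adjugate = 0 := by
    refine Matrix.ext fun i j => ?_
    have h5 := congrFun (congrFun key2 i) j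
    simp only [Matrix.smul_apply, smul_eq_mul] at h5
    have hdvd : pS ∣ (E * MS.adjugate) i j := hcop.dvd_of_dvd_mul_left ⟨R i j, h5⟩
    rw [Matrix.zero_apply]
    refine Polynomial.eq_zero_of_dvd_of_degree_lt hdvd ?_
    have hdegQ : ((E * MS.adjugate) i j).degree ≤ ((ν - 1 : ℕ) : WithBot ℕ) := by
      rw [Matrix.mul_apply]
      refine (Polynomial.degree_sum_le _ _).trans (Finset.sup_le fun k' _ => ?_)
      refine (Polynomial.degree_mul_le _ _).trans ?_
      have h8 : (E i k').degree ≤ 0 := by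
        rw [hEdef]; exact Polynomial.degree_C_le
      have h9 := degree_adjugate_charmatrix_le Sc k' j
      calc (E i k').degree + (MS.adjugate k' j).degree
          ≤ 0 + ((ν - 1 : ℕ) : WithBot ℕ) := by
            rw [hMSdef]; exact add_le_add h8 h9
        _ = ((ν - 1 : ℕ) : WithBot ℕ) := by rw [zero_add]
    rw [hdegS]
    refine lt_of_le_of_lt hdegQ ?_
    exact_mod_cast Nat.sub_lt hν one_pos
  have hE0 : E = 0 := by
    have h10 : (E * MS.adjugate) * MS = pS • E := by
      rw [Matrix.mul_assoc, Matrix.adjugate_mul, Matrix.mul_smul, Matrix.mul_one, hdetMS]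
    rw [hQ, Matrix.zero_mul] at h10
    refine Matrix.ext fun i j => ?_
    have h11 := congrFun (congrFun h10.symm i) j
    simp only [Matrix.smul_apply, smul_eq_mul, Matrix.zero_apply] at h11
    rcases mul_eq_zero.mp h11 with h | h
    · exact absurd (hpS ▸ h) (Sc.charpoly_monic.ne_zero)
    · rw [Matrix.zero_apply]; exact h
  have hC : Cc * Pc = Ctc * Ptc := by
    rw [hEdef] at hE0
    refine Matrix.ext fun i j => ?_
    have h12 := congrFun (congrFun hE0 i) j
    simp only [Matrix.map_apply, Matrix.zero_apply, Matrix.sub_apply] at h12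
    have h13 := Polynomial.C_eq_zero.mp h12
    exact sub_eq_zero.mp h13
  ext i j
  have h13 : (C * Pim).map Complex.ofReal = (Ct * Pimt).map Complex.ofReal := by
    rw [map_ofReal_mul, map_ofReal_mul]
    exact hC
  have h14 := congrFun (congrFun h13 i) j
  simp only [Matrix.map_apply] at h14
  exact_mod_cast h14
end
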